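/- Let I be a symmetric monomial ideal with Λ(I) = {λ} for a single partition λ (a symmetric principal monomial ideal). If ℓ(λ) ≤ ⌊n/2⌋ and λ_1 > λ_2, then with c = λ_1 − 1 and p = 2ℓ(λ), the monomials f = (x_1⋯x_{ℓ(λ)})^c and g = (x_{ℓ(λ)+1}⋯x_p)^c satisfy f ∈ I:(x_1,…,x_{ℓ(λ)}), g ∈ I:(x_{ℓ(λ)+1},…,x_p), and fg ∉ I. -/

import Mathlib

open MvPolynomial

lemma prodpow {k : Type*} [CommSemiring k] {n : ℕ} (e : Fin n → ℕ) :
    (∏ i : Fin n, (X i : MvPolynomial (Fin n) k) ^ e i)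
      = monomial (Finsupp.equivFunOnFinite.symm e) 1 := by
  have key : ∀ s : Finset (Fin n), (∏ i ∈ s, (X i : MvPolynomial (Fin n) k) ^ e i)
      = monomial (∑ i ∈ s, Finsupp.single i (e i)) 1 := by
    intro s
    induction s using Finset.induction with
    | empty => simp
    | @insert a s ha ih =>
      rw [Finset.prod_insert ha, Finset.sum_insert ha, ih, X_pow_eq_monomial,
        monomial_mul, one_mul]
  have h : Finsupp.equivFunOnFinite.symm e = ∑ i : Fin n, Finsupp.single i (e i) := by
    ext j; simp [Finsupp.finset_sum_apply, Finsupp.single_apply]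
  rw [h, key]

lemma mem_of_perm {k : Type*} [Field k] {n : ℕ} (lam : Fin n → ℕ)
    (d : Fin n →₀ ℕ) (π : Equiv.Perm (Fin n)) (h : ∀ j, lam (π j) ≤ d j) :
    monomial d (1:k) ∈ Ideal.span
      {f | ∃ π : Equiv.Perm (Fin n), f = ∏ i : Fin n, X i ^ lam (π i)} := by
  have hg : (∏ i : Fin n, (X i : MvPolynomial (Fin n) k) ^ lam (π i)) ∈
      Ideal.span {f | ∃ π : Equiv.Perm (Fin n), f = ∏ i : Fin n, X i ^ lam (π i)} :=
    Ideal.subset_span ⟨π, rfl⟩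
  rw [prodpow] at hg
  have hle : Finsupp.equivFunOnFinite.symm (fun i => lam (π i)) ≤ d := by
    intro j; simpa using h j
  have heq : monomial d (1:k)
      = monomial (d - Finsupp.equivFunOnFinite.symm (fun i => lam (π i))) 1
        * monomial (Finsupp.equivFunOnFinite.symm (fun i => lam (π i))) 1 := by
    rw [monomial_mul, one_mul, tsub_add_cancel_of_le hle]
  rw [heq]
  exact Ideal.mul_mem_left _ _ hg

lemma colon_of_gens {R : Type*} [CommRing R] (I : Ideal R) (S : Set R) (f : R)
    (h : ∀ s ∈ S, f * s ∈ I) : f ∈ Submodule.colon I (Ideal.span S) := by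
  rw [Submodule.mem_colon]
  intro p hp
  induction hp using Submodule.span_induction with
  | mem x hx => rw [smul_eq_mul]; exact h x hx
  | zero => simp
  | add x y _ _ hx hy => rw [smul_add]; exact I.add_mem hx hy
  | smul a x _ hx => rw [smul_comm]; exact Ideal.mul_mem_left _ _ hx

lemma filterpow {k : Type*} [CommSemiring k] {n : ℕ} (P : Fin n → Prop) [DecidablePred P]
    (c : ℕ) :
    (∏ i ∈ Finset.univ.filter P, (X i : MvPolynomial (Fin n) k)) ^ c
      = ∏ i : Fin n, X i ^ (fun i => if P i then c else 0) i := by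
  rw [← Finset.prod_pow, Finset.prod_filter]
  refine Finset.prod_congr rfl fun i _ => ?_
  split_ifs with h <;> simp [h]

def bswap (n L : ℕ) (h : 2 * L ≤ n) : Equiv.Perm (Fin n) :=
  Function.Involutive.toPerm
    (fun j => if h1 : j.val < L then (⟨j.val + L, by omega⟩ : Fin n)
      else if h2 : j.val < 2 * L then ⟨j.val - L, by omega⟩ else j)
    (by
      intro j
      by_cases h1 : j.val < L
      · have ha : ¬ (j.val + L < L) := by omega
        have hb : j.val + L < 2 * L := by omega
        simp only [dif_pos h1, dif_neg ha, dif_pos hb]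
        apply Fin.ext; simp only [Fin.val_mk]; omega
      · by_cases h2 : j.val < 2 * L
        · have ha : j.val - L < L := by omega
          simp only [dif_neg h1, dif_pos h2, dif_pos ha]
          apply Fin.ext; simp only [Fin.val_mk]; omega
        · simp only [dif_neg h1, dif_neg h2])

lemma bswap_val (n L : ℕ) (h : 2 * L ≤ n) (j : Fin n) :
    (bswap n L h j).val
      = if j.val < L then j.val + L else if j.val < 2 * L then j.val - L else j.val := by
  show ((fun j : Fin n => if h1 : j.val < L then (⟨j.val + L, by omega⟩ : Fin n)
      else if h2 : j.val < 2 * L then ⟨j.val - L, by omega⟩ else j) j).val = _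
  by_cases h1 : j.val < L
  · simp only [dif_pos h1, if_pos h1, Fin.val_mk]
  · by_cases h2 : j.val < 2 * L
    · simp only [dif_neg h1, dif_pos h2, if_neg h1, if_pos h2, Fin.val_mk]
    · simp only [dif_neg h1, dif_neg h2, if_neg h1, if_neg h2]

set_option maxHeartbeats 2000000 in
theorem stmt13 {k : Type*} [Field k] {n : ℕ} (hn : 2 ≤ n)
    (lam : Fin n → ℕ) (hanti : Antitone lam)
    (L : ℕ)
    (hL1 : ∀ i : Fin n, i.val < L → lam i ≠ 0)
    (hL2 : ∀ i : Fin n, L ≤ i.val → lam i = 0)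
    (hLn : L ≤ n / 2)
    (hlam : lam ⟨1, by omega⟩ < lam ⟨0, by omega⟩)
    (I : Ideal (MvPolynomial (Fin n) k))
    (hI : I = Ideal.span
      {f | ∃ π : Equiv.Perm (Fin n), f = ∏ i : Fin n, X i ^ lam (π i)}) :
    ((∏ i ∈ Finset.univ.filter (fun i : Fin n => i.val < L), X i)
        ^ (lam ⟨0, by omega⟩ - 1)
      ∈ Submodule.colon I ((Ideal.span {x | ∃ i : Fin n, i.val < L ∧ x = X i} :
          Ideal (MvPolynomial (Fin n) k)) : Set (MvPolynomial (Fin n) k)))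
    ∧ ((∏ i ∈ Finset.univ.filter (fun i : Fin n => L ≤ i.val ∧ i.val < 2 * L), X i)
        ^ (lam ⟨0, by omega⟩ - 1)
      ∈ Submodule.colon I
          ((Ideal.span {x | ∃ i : Fin n, L ≤ i.val ∧ i.val < 2 * L ∧ x = X i} :
            Ideal (MvPolynomial (Fin n) k)) : Set (MvPolynomial (Fin n) k)))
    ∧ ((∏ i ∈ Finset.univ.filter (fun i : Fin n => i.val < L), X i)
          ^ (lam ⟨0, by omega⟩ - 1) *
        (∏ i ∈ Finset.univ.filter (fun i : Fin n => L ≤ i.val ∧ i.val < 2 * L), X i)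
          ^ (lam ⟨0, by omega⟩ - 1)
        ∉ I) := by
  subst hI
  have h2L : 2 * L ≤ n := by omega
  set zn : Fin n := ⟨0, by omega⟩ with hzn
  set one1 : Fin n := ⟨1, by omega⟩ with hon
  have hlam' : lam one1 < lam zn := hlam
  have hznv : zn.val = 0 := rfl
  have honv : one1.val = 1 := rfl
  have hL0 : 0 < L := by
    by_contra h
    have h1 : lam zn = 0 := hL2 zn (by omega)
    omega
  -- any index with positive value has lam ≤ lam zn - 1
  have hsmall : ∀ t : Fin n, 1 ≤ t.val → lam t ≤ lam zn - 1 := by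
    intro t ht
    have h1 : lam t ≤ lam one1 := hanti (by rw [Fin.le_def]; omega)
    omega
  have hbig : 1 ≤ lam zn := by omega
  refine ⟨?_, ?_, ?_⟩
  · -- claim 1
    apply colon_of_gens
    rintro s ⟨i0, hi0, rfl⟩
    rw [filterpow, prodpow, ← pow_one (X i0 : MvPolynomial (Fin n) k),
      X_pow_eq_monomial, monomial_mul, one_mul]
    apply mem_of_perm lam _ (Equiv.swap i0 zn)
    intro j
    have hd : ((Finsupp.equivFunOnFinite.symm
          (fun i : Fin n => if i.val < L then lam zn - 1 else 0)
        + Finsupp.single i0 1 : Fin n →₀ ℕ)) j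
        = (if j.val < L then lam zn - 1 else 0) + (if i0 = j then 1 else 0) := by
      simp [Finsupp.single_apply]
    rw [hd]
    by_cases h1 : j = i0
    · subst h1
      rw [Equiv.swap_apply_left]
      rw [if_pos hi0, if_pos rfl]
      omega
    · by_cases h2 : j = zn
      · subst h2
        rw [Equiv.swap_apply_right]
        have hne : i0 ≠ zn := fun he => h1 he.symm
        have hvi : 1 ≤ i0.val := by
          rcases Nat.eq_zero_or_pos i0.val with h | h
          · exact absurd (Fin.ext (h.trans hznv.symm)) hne
          · exact h
        have h4 := hsmall i0 hvi
        have hne' : ¬ (i0 = zn) := hne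
        rw [if_pos (show zn.val < L by omega), if_neg hne']
        omega
      · rw [Equiv.swap_apply_of_ne_of_ne h1 h2]
        have hne'' : ¬ (i0 = j) := fun he => h1 he.symm
        rw [if_neg hne'']
        by_cases h3 : j.val < L
        · have hvj : 1 ≤ j.val := by
            rcases Nat.eq_zero_or_pos j.val with h | h
            · exact absurd (Fin.ext (h.trans hznv.symm)) h2
            · exact h
          have h4 := hsmall j hvj
          rw [if_pos h3]
          omega
        · have h4 := hL2 j (by omega)
          rw [if_neg h3]
          omega
  · -- claim 2
    apply colon_of_gens
    rintro s ⟨i0, hi0a, hi0b, rfl⟩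
    rw [filterpow, prodpow, ← pow_one (X i0 : MvPolynomial (Fin n) k),
      X_pow_eq_monomial, monomial_mul, one_mul]
    have hi'lt : i0.val - L < n := by omega
    refine mem_of_perm lam _
      ((bswap n L h2L).trans (Equiv.swap zn ⟨i0.val - L, hi'lt⟩)) (fun j => ?_)
    have hd : ((Finsupp.equivFunOnFinite.symm
          (fun i : Fin n => if L ≤ i.val ∧ i.val < 2 * L then lam zn - 1 else 0)
        + Finsupp.single i0 1 : Fin n →₀ ℕ)) j
        = (if L ≤ j.val ∧ j.val < 2 * L then lam zn - 1 else 0)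
          + (if i0 = j then 1 else 0) := by
      simp [Finsupp.single_apply]
    rw [hd]
    rw [Equiv.trans_apply]
    set w : Fin n := bswap n L h2L j with hw
    have hwv : w.val = if j.val < L then j.val + L
        else if j.val < 2 * L then j.val - L else j.val := bswap_val n L h2L j
    rw [Equiv.swap_apply_def]
    by_cases h1 : j = i0
    · subst h1
      have hwi : w = ⟨j.val - L, hi'lt⟩ := by
        apply Fin.ext
        rw [hwv, if_neg (by omega : ¬ j.val < L), if_pos hi0b]
      by_cases hz : w = zn
      · rw [if_pos hz]
        have hiz : (⟨j.val - L, hi'lt⟩ : Fin n) = zn := hwi.symm.trans hz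
        rw [hiz, if_pos (And.intro hi0a hi0b), if_pos rfl]
        omega
      · rw [if_neg hz, if_pos hwi, if_pos (And.intro hi0a hi0b), if_pos rfl]
        omega
    · have hne : ¬ (i0 = j) := fun he => h1 he.symm
      rw [if_neg hne]
      by_cases h2 : L ≤ j.val ∧ j.val < 2 * L
      · rw [if_pos h2]
        have hwv' : w.val = j.val - L := by
          rw [hwv, if_neg (by omega : ¬ j.val < L), if_pos h2.2]
        have hwni : ¬ (w = (⟨i0.val - L, hi'lt⟩ : Fin n)) := by
          intro he
          apply h1
          apply Fin.ext
          have := congrArg Fin.val he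
          rw [hwv'] at this
          simp only [Fin.val_mk] at this
          omega
        by_cases h3 : w = zn
        · rw [if_pos h3]
          have hvi : 1 ≤ (⟨i0.val - L, hi'lt⟩ : Fin n).val := by
            simp only [Fin.val_mk]
            have hj : j.val = L := by
              have := congrArg Fin.val h3
              rw [hwv', hznv] at this
              omega
            by_contra hcc
            apply h1
            apply Fin.ext
            omega
          have h5 := hsmall _ hvi
          omega
        · rw [if_neg h3, if_neg hwni]
          have hvw : 1 ≤ w.val := by
            rw [hwv']
            by_contra hcc
            apply h3
            apply Fin.ext
            rw [hwv', hznv]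
            omega
          have h5 := hsmall w hvw
          omega
      · rw [if_neg h2]
        have hwbig : L ≤ w.val := by
          rw [hwv]
          split_ifs <;> omega
        have hwz : ¬ (w = zn) := by
          intro he
          have := congrArg Fin.val he
          rw [hznv] at this
          omega
        have hwi : ¬ (w = (⟨i0.val - L, hi'lt⟩ : Fin n)) := by
          intro he
          have := congrArg Fin.val he
          simp only [Fin.val_mk] at this
          omega
        rw [if_neg hwz, if_neg hwi]
        have h5 := hL2 w hwbig
        omega
  · -- claim 3
    rw [filterpow, filterpow, prodpow, prodpow, monomial_mul, one_mul]
    have hset : {f | ∃ π : Equiv.Perm (Fin n), f = ∏ i : Fin n, X i ^ lam (π i)}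
        = (fun s => monomial s (1 : k)) ''
          {d : Fin n →₀ ℕ | ∃ π : Equiv.Perm (Fin n),
            d = Finsupp.equivFunOnFinite.symm (fun i => lam (π i))} := by
      ext q
      simp only [Set.mem_setOf_eq, Set.mem_image]
      constructor
      · rintro ⟨π, rfl⟩
        exact ⟨_, ⟨π, rfl⟩, (prodpow _).symm⟩
      · rintro ⟨d, ⟨π, rfl⟩, rfl⟩
        exact ⟨π, (prodpow _).symm⟩
    rw [hset]
    intro hmem
    rw [mem_ideal_span_monomial_image] at hmem
    have hsupp := hmem
      ((Finsupp.equivFunOnFinite.symm fun i : Fin n => if ↑i < L then lam zn - 1 else 0) +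
        Finsupp.equivFunOnFinite.symm fun i : Fin n =>
          if L ≤ ↑i ∧ ↑i < 2 * L then lam zn - 1 else 0)
      (by simp [support_monomial])
    obtain ⟨d, ⟨π, rfl⟩, hled⟩ := hsupp
    have h1 : lam (π (π.symm zn)) ≤
        (if (π.symm zn).val < L then lam zn - 1 else 0)
        + (if L ≤ (π.symm zn).val ∧ (π.symm zn).val < 2 * L then lam zn - 1 else 0) := by
      simpa using hled (π.symm zn)
    rw [Equiv.apply_symm_apply] at h1
    split_ifs at h1 <;> omega
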